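/- arXiv:1710.08646 — 4 statements merged into one kernel-verified Lean document; each statement's English description precedes it below -/
import Mathlib

section
/- For ℓ ≥ 1 and d ≥ ℓ + 4, one has s_{ℓ+1}^{d-ℓ-1} ≤ s_{ℓ+2}^{d-ℓ-2}, where s_i is the i-th Sylvester number. -/
/-- The Sylvester sequence: `s 1 = 2` and `s i = 1 + s 1 * s 2 * ⋯ * s (i-1)` for `i ≥ 2`. -/
def sylvester : ℕ → ℕ
  | 0 => 2
  | 1 => 2
  | n + 2 => 1 + ∏ i ∈ (Finset.Icc 1 (n + 1)).attach, sylvester i.1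
  decreasing_by
    exact Nat.lt_succ_of_le (Finset.mem_Icc.mp i.2).2

lemma sylvester_succ_eq (n : ℕ) :
    sylvester (n + 1) = 1 + ∏ i ∈ Finset.Icc 1 n, sylvester i := by
  cases n with
  | zero => simp [sylvester]
  | succ m =>
    rw [sylvester]
    congr 1
    exact Finset.prod_attach _ _

lemma sylvester_rec (n : ℕ) :
    sylvester (n + 2) = 1 + (sylvester (n + 1) - 1) * sylvester (n + 1) := by
  rw [sylvester_succ_eq (n + 1), sylvester_succ_eq n,
    Finset.prod_Icc_succ_top (Nat.le_add_left 1 n)]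
  congr 1
  rw [Nat.add_sub_cancel_left, ← sylvester_succ_eq n]

lemma sylvester_pos (n : ℕ) : 0 < sylvester n := by
  cases n with
  | zero => simp [sylvester]
  | succ m => rw [sylvester_succ_eq]; omega

lemma sylvester_two_le (n : ℕ) : 2 ≤ sylvester n := by
  cases n with
  | zero => simp [sylvester]
  | succ m =>
    rw [sylvester_succ_eq]
    have : 0 < ∏ i ∈ Finset.Icc 1 m, sylvester i :=
      Finset.prod_pos fun i _ => sylvester_pos i
    omega

lemma sylvester_three_le (n : ℕ) : 3 ≤ sylvester (n + 2) := by
  rw [sylvester_rec]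
  have h := sylvester_two_le (n + 1)
  have h2 : 1 * 2 ≤ (sylvester (n + 1) - 1) * sylvester (n + 1) :=
    Nat.mul_le_mul (by omega) h
  omega

theorem sylvester_pow_mono (ℓ d : ℕ) (hℓ : 1 ≤ ℓ) (hd : ℓ + 4 ≤ d) :
    sylvester (ℓ + 1) ^ (d - ℓ - 1) ≤ sylvester (ℓ + 2) ^ (d - ℓ - 2) := by
  obtain ⟨m, rfl⟩ := Nat.exists_eq_add_of_le hℓ
  set a := sylvester (1 + m + 1) with ha
  have ha3 : 3 ≤ a := by
    have : 1 + m + 1 = m + 2 := by ring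
    rw [ha, this]; exact sylvester_three_le m
  set k := d - (1 + m) - 2 with hk
  have hk2 : 2 ≤ k := by omega
  have h1 : d - (1 + m) - 1 = k + 1 := by omega
  rw [h1]
  have hs : a * (a - 1) ≤ sylvester (1 + m + 2) := by
    rw [sylvester_rec (1 + m)]
    nlinarith
  calc a ^ (k + 1) = a ^ k * a := by ring
    _ ≤ a ^ k * (a - 1) ^ k := by
        apply Nat.mul_le_mul_left
        calc a ≤ (a - 1) ^ 2 := by nlinarith [Nat.sub_add_cancel (by omega : 1 ≤ a)]
          _ ≤ (a - 1) ^ k := Nat.pow_le_pow_right (by omega) hk2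
    _ = (a * (a - 1)) ^ k := by rw [mul_pow]
    _ ≤ sylvester (1 + m + 2) ^ k := Nat.pow_le_pow_left hs k
end

section
/- Let β = (β_1, …, β_{d+1}) be a feasible solution of the optimization problem, i.e., β_1 ≥ β_2 ≥ ⋯ ≥ β_{d+1} ≥ 0, β_1 + ⋯ + β_{d+1} = 1, and for every t ∈ [d] the product-sum inequality ∏_{i=1}^t (β_i - β_{d+1}) ≤ ∑_{j=t+1}^{d+1} (β_j - β_{d+1}) + (d+1) β_{d+1} holds. Then β_t > 0 for every t ∈ [d+1]. -/
theorem feasible_all_pos (d : ℕ) (hd : 1 ≤ d) (β : ℕ → ℝ)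
    (hord : ∀ t, 1 ≤ t → t ≤ d → β (t + 1) ≤ β t)
    (hnn : 0 ≤ β (d + 1))
    (hsum : ∑ i ∈ Finset.Icc 1 (d + 1), β i = 1)
    (hPS : ∀ t ∈ Finset.Icc 1 d,
      ∏ i ∈ Finset.Icc 1 t, (β i - β (d + 1)) ≤
        (∑ j ∈ Finset.Icc (t + 1) (d + 1), (β j - β (d + 1))) + ((d : ℝ) + 1) * β (d + 1)) :
    ∀ t ∈ Finset.Icc 1 (d + 1), 0 < β t := by
  have hmono : ∀ j, j ≤ d + 1 → ∀ i, 1 ≤ i → i ≤ j → β j ≤ β i := by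
    intro j
    induction j with
    | zero => intro _ i hi hij; omega
    | succ n ih =>
      intro hj i hi hij
      rcases Nat.lt_or_ge i (n+1) with h | h
      · have h1 : 1 ≤ n := by omega
        have ha := hord n h1 (by omega)
        have hb := ih (by omega) i hi (by omega)
        linarith
      · have : i = n + 1 := by omega
        simp [this]
  have hge : ∀ t, 1 ≤ t → t ≤ d + 1 → β (d+1) ≤ β t := fun t h1 h2 =>
    hmono (d+1) le_rfl t h1 h2
  rcases lt_or_eq_of_le hnn with hpos | hz
  · intro t ht
    simp only [Finset.mem_Icc] at ht
    exact lt_of_lt_of_le hpos (hge t ht.1 ht.2)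
  · exfalso
    have hz' : β (d+1) = 0 := hz.symm
    have hP : ∃ t, 1 ≤ t ∧ t ≤ d + 1 ∧ β t = 0 := ⟨d+1, by omega, le_rfl, hz'⟩
    classical
    set t0 := Nat.find hP with ht0def
    obtain ⟨h1, h2, h3⟩ := Nat.find_spec hP
    have hposlt : ∀ i, 1 ≤ i → i < t0 → 0 < β i := by
      intro i hi hilt
      have hne : ¬ (1 ≤ i ∧ i ≤ d + 1 ∧ β i = 0) := Nat.find_min hP hilt
      have hle : i ≤ d + 1 := by omega
      have h0 : 0 ≤ β i := hz' ▸ hge i hi hle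
      rcases h0.lt_or_eq with h | h
      · exact h
      · exact absurd ⟨hi, hle, h.symm⟩ hne
    have hzero : ∀ j, t0 ≤ j → j ≤ d + 1 → β j = 0 := by
      intro j hj hj'
      have hle := hmono j hj' t0 h1 hj
      have h0 : 0 ≤ β j := hz' ▸ hge j (by omega) hj'
      rw [h3] at hle
      linarith
    rcases Nat.eq_or_lt_of_le h1 with heq | hlt
    · have hsz : ∑ i ∈ Finset.Icc 1 (d+1), β i = 0 := by
        apply Finset.sum_eq_zero
        intro x hx
        simp only [Finset.mem_Icc] at hx
        exact hzero x (by omega) hx.2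
      linarith [hsum]
    · have ht : t0 - 1 ∈ Finset.Icc 1 d := by
        simp only [Finset.mem_Icc]; omega
      have hps := hPS (t0 - 1) ht
      have hprod : ∀ i ∈ Finset.Icc 1 (t0-1), 0 < β i - β (d+1) := by
        intro i hi
        simp only [Finset.mem_Icc] at hi
        have := hposlt i hi.1 (by omega)
        rw [hz']; linarith
      have hL : 0 < ∏ i ∈ Finset.Icc 1 (t0-1), (β i - β (d+1)) :=
        Finset.prod_pos hprod
      have hR : (∑ j ∈ Finset.Icc (t0 - 1 + 1) (d+1), (β j - β (d+1))) + ((d:ℝ)+1) * β (d+1) = 0 := by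
        rw [hz']
        simp only [sub_zero, mul_zero, add_zero]
        apply Finset.sum_eq_zero
        intro x hx
        simp only [Finset.mem_Icc] at hx
        exact hzero x (by omega) hx.2
      linarith
end

section
/- Let β = (β_1, …, β_{d+1}) satisfy β_1 ≥ ⋯ ≥ β_{d+1} > 0, β_1 + ⋯ + β_{d+1} = 1, and the product-sum inequalities ∏_{i=1}^t (β_i - β_{d+1}) ≤ ∑_{j=t+1}^{d+1} (β_j - β_{d+1}) + (d+1) β_{d+1} for all t ∈ [d]. Then for every t ∈ [d], either β_t > β_{t+1} (the ordering inequality is strict) or the product-sum inequality PS(t) is strict. -/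
theorem feasible_ord_or_ps_strict (d : ℕ) (hd : 1 ≤ d) (β : ℕ → ℝ)
    (hord : ∀ t, 1 ≤ t → t ≤ d → β (t + 1) ≤ β t)
    (hpos : 0 < β (d + 1))
    (hsum : ∑ i ∈ Finset.Icc 1 (d + 1), β i = 1)
    (hPS : ∀ t ∈ Finset.Icc 1 d,
      ∏ i ∈ Finset.Icc 1 t, (β i - β (d + 1)) ≤
        (∑ j ∈ Finset.Icc (t + 1) (d + 1), (β j - β (d + 1))) + ((d : ℝ) + 1) * β (d + 1)) :
    ∀ t ∈ Finset.Icc 1 d,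
      β (t + 1) < β t ∨
      ∏ i ∈ Finset.Icc 1 t, (β i - β (d + 1)) <
        (∑ j ∈ Finset.Icc (t + 1) (d + 1), (β j - β (d + 1))) + ((d : ℝ) + 1) * β (d + 1) := by
  intro t ht
  simp only [Finset.mem_Icc] at ht
  obtain ⟨ht1, htd⟩ := ht
  by_contra h
  push_neg at h
  obtain ⟨hle, hge⟩ := h
  have heq1 : β t = β (t + 1) := le_antisymm hle (hord t ht1 htd)
  set c := β (d + 1) with hc
  -- c ≤ β j for all 1 ≤ j ≤ d+1
  have hmono : ∀ m, m ≤ d → c ≤ β (d + 1 - m) := by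
    intro m
    induction m with
    | zero => simp [hc]
    | succ n ih =>
      intro hn
      have hnd : n ≤ d := Nat.le_of_succ_le hn
      have h1 : 1 ≤ d - n := by omega
      have hstep := hord (d - n) h1 (Nat.sub_le d n)
      have hrw : d + 1 - (n + 1) = d - n := by omega
      have hrw2 : d - n + 1 = d + 1 - n := by omega
      rw [hrw]
      calc c ≤ β (d + 1 - n) := ih hnd
        _ = β (d - n + 1) := by rw [hrw2]
        _ ≤ β (d - n) := hstep
  have hmono' : ∀ j, 1 ≤ j → j ≤ d + 1 → c ≤ β j := by
    intro j hj1 hj2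
    have hj : j = d + 1 - (d + 1 - j) := by omega
    rw [hj]
    exact hmono (d + 1 - j) (by omega)
  -- each β j ≤ 1
  have hβle : ∀ j, 1 ≤ j → j ≤ d + 1 → β j ≤ 1 := by
    intro j hj1 hj2
    rw [← hsum]
    exact Finset.single_le_sum (fun i hi => by
      simp only [Finset.mem_Icc] at hi
      exact le_of_lt (lt_of_lt_of_le hpos (hmono' i hi.1 hi.2)))
      (Finset.mem_Icc.mpr ⟨hj1, hj2⟩)
  obtain ⟨s, rfl⟩ : ∃ s, t = s + 1 := ⟨t - 1, by omega⟩
  -- split the product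
  have hprod : ∏ i ∈ Finset.Icc 1 (s + 1), (β i - c) =
      (∏ i ∈ Finset.Icc 1 s, (β i - c)) * (β (s + 1) - c) :=
    Finset.prod_Icc_succ_top (by omega) _
  -- split the sum
  have hset : Finset.Icc (s + 1 + 1) (d + 1) = insert (s + 1 + 1) (Finset.Icc (s + 1 + 2) (d + 1)) := by
    ext j
    simp only [Finset.mem_Icc, Finset.mem_insert]
    omega
  have hnotmem : (s + 1 + 1) ∉ Finset.Icc (s + 1 + 2) (d + 1) := by
    simp only [Finset.mem_Icc]; omega
  have hsumsplit : ∑ j ∈ Finset.Icc (s + 1 + 1) (d + 1), (β j - c) =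
      (β (s + 1 + 1) - c) + ∑ j ∈ Finset.Icc (s + 1 + 2) (d + 1), (β j - c) := by
    rw [hset, Finset.sum_insert hnotmem]
  -- prefix product in [0,1]
  have hP0 : 0 ≤ ∏ i ∈ Finset.Icc 1 s, (β i - c) :=
    Finset.prod_nonneg (fun i hi => by
      simp only [Finset.mem_Icc] at hi
      linarith [hmono' i hi.1 (by omega)])
  have hP1 : ∏ i ∈ Finset.Icc 1 s, (β i - c) ≤ 1 :=
    Finset.prod_le_one (fun i hi => by
      simp only [Finset.mem_Icc] at hi
      linarith [hmono' i hi.1 (by omega)])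
      (fun i hi => by
      simp only [Finset.mem_Icc] at hi
      have := hβle i hi.1 (by omega)
      have := hmono' (d + 1) (by omega) le_rfl
      linarith [hpos])
  -- x ≥ 0
  have hx0 : 0 ≤ β (s + 1) - c := by linarith [hmono' (s + 1) (by omega) (by omega)]
  -- tail sum nonneg
  have hS' : 0 ≤ ∑ j ∈ Finset.Icc (s + 1 + 2) (d + 1), (β j - c) :=
    Finset.sum_nonneg (fun j hj => by
      simp only [Finset.mem_Icc] at hj
      linarith [hmono' j (by omega) hj.2])
  have hdc : 0 < ((d : ℝ) + 1) * c := by positivity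
  have hLHS : ∏ i ∈ Finset.Icc 1 (s + 1), (β i - c) ≤ β (s + 1) - c := by
    rw [hprod]
    exact mul_le_of_le_one_left hx0 hP1
  have hβeq : β (s + 1 + 1) = β (s + 1) := heq1.symm
  linarith [hge, hsumsplit]
end

section
/- For every ℓ ∈ [d] and every α with 1/((d+1)(s_{ℓ+1}-1)) ≤ α ≤ 1/((d+1)(s_ℓ-1)), the function f_ℓ(α) = (∏_{i=1}^{ℓ-1}(1/s_i + α)) · (1/(s_ℓ - 1) - dα) · α^{d-ℓ} satisfies f_ℓ(α) ≥ 1/y_ℓ, where y_ℓ = (s_ℓ - 1)^2 (d+1)^{d-ℓ+1} (s_{ℓ+1} - 1)^{d-ℓ}. -/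
lemma sylvester_ge_two : ∀ n, 2 ≤ sylvester n := by
  intro n
  induction n using Nat.strong_induction_on with
  | _ n ih =>
    match n with
    | 0 => simp [sylvester]
    | 1 => simp [sylvester]
    | n + 2 =>
      rw [sylvester]
      have : 1 ≤ ∏ i ∈ (Finset.Icc 1 (n + 1)).attach, sylvester i.1 := by
        apply Finset.one_le_prod'
        intro i _
        have := ih i.1 (Nat.lt_succ_of_le (Finset.mem_Icc.mp i.2).2)
        omega
      omega

lemma sylvester_prod (ℓ : ℕ) (h : 1 ≤ ℓ) :
    ∏ i ∈ Finset.Icc 1 (ℓ - 1), sylvester i = sylvester ℓ - 1 := by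
  match ℓ, h with
  | 1, _ => simp [sylvester]
  | n + 2, _ =>
    have : sylvester (n + 2) = 1 + ∏ i ∈ (Finset.Icc 1 (n + 1)).attach, sylvester i.1 := by
      rw [sylvester]
    rw [this, Finset.prod_attach (Finset.Icc 1 (n + 1)) sylvester]
    simp

theorem f_ell_ge_inv_y_ell (d ℓ : ℕ) (hd : 1 ≤ d) (hℓ : ℓ ∈ Finset.Icc 1 d) (α : ℝ)
    (hα1 : 1 / (((d : ℝ) + 1) * ((sylvester (ℓ + 1) : ℝ) - 1)) ≤ α)
    (hα2 : α ≤ 1 / (((d : ℝ) + 1) * ((sylvester ℓ : ℝ) - 1))) :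
    (∏ i ∈ Finset.Icc 1 (ℓ - 1), (1 / (sylvester i : ℝ) + α)) *
        (1 / ((sylvester ℓ : ℝ) - 1) - (d : ℝ) * α) * α ^ (d - ℓ) ≥
      1 / (((sylvester ℓ : ℝ) - 1) ^ 2 * ((d : ℝ) + 1) ^ (d - ℓ + 1) *
        ((sylvester (ℓ + 1) : ℝ) - 1) ^ (d - ℓ)) := by
  obtain ⟨hℓ1, hℓd⟩ := Finset.mem_Icc.mp hℓ
  have hs2 : (2 : ℝ) ≤ (sylvester ℓ : ℝ) := by exact_mod_cast sylvester_ge_two ℓ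
  have hS2 : (2 : ℝ) ≤ (sylvester (ℓ + 1) : ℝ) := by exact_mod_cast sylvester_ge_two (ℓ + 1)
  have hs1 : (0 : ℝ) < (sylvester ℓ : ℝ) - 1 := by linarith
  have hS1 : (0 : ℝ) < (sylvester (ℓ + 1) : ℝ) - 1 := by linarith
  have hd1 : (0 : ℝ) < (d : ℝ) + 1 := by positivity
  have hq : (0 : ℝ) < 1 / (((d : ℝ) + 1) * ((sylvester (ℓ + 1) : ℝ) - 1)) := by positivity
  have hα0 : 0 < α := lt_of_lt_of_le hq hα1
  -- product lower bound
  have hprodcast : (∏ i ∈ Finset.Icc 1 (ℓ - 1), (sylvester i : ℝ)) = (sylvester ℓ : ℝ) - 1 := by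
    rw [← Nat.cast_prod, sylvester_prod ℓ hℓ1]
    have : 1 ≤ sylvester ℓ := le_trans (by norm_num) (sylvester_ge_two ℓ)
    push_cast [Nat.cast_sub this]
    ring
  have hA : 1 / ((sylvester ℓ : ℝ) - 1) ≤
      ∏ i ∈ Finset.Icc 1 (ℓ - 1), (1 / (sylvester i : ℝ) + α) := by
    have h1 : ∏ i ∈ Finset.Icc 1 (ℓ - 1), (1 / (sylvester i : ℝ)) ≤
        ∏ i ∈ Finset.Icc 1 (ℓ - 1), (1 / (sylvester i : ℝ) + α) := by
      apply Finset.prod_le_prod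
      · intro i _
        have : (2 : ℝ) ≤ (sylvester i : ℝ) := by exact_mod_cast sylvester_ge_two i
        positivity
      · intro i _; linarith
    have h2 : ∏ i ∈ Finset.Icc 1 (ℓ - 1), (1 / (sylvester i : ℝ)) =
        1 / ((sylvester ℓ : ℝ) - 1) := by
      simp only [one_div]
      rw [Finset.prod_inv_distrib, hprodcast]
    linarith [h2 ▸ h1]
  -- second factor lower bound
  have hB : 1 / (((d : ℝ) + 1) * ((sylvester ℓ : ℝ) - 1)) ≤
      1 / ((sylvester ℓ : ℝ) - 1) - (d : ℝ) * α := by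
    have hdα : (d : ℝ) * α ≤ (d : ℝ) * (1 / (((d : ℝ) + 1) * ((sylvester ℓ : ℝ) - 1))) :=
      mul_le_mul_of_nonneg_left hα2 (Nat.cast_nonneg d)
    have e : 1 / ((sylvester ℓ : ℝ) - 1) -
        (d : ℝ) * (1 / (((d : ℝ) + 1) * ((sylvester ℓ : ℝ) - 1))) =
        1 / (((d : ℝ) + 1) * ((sylvester ℓ : ℝ) - 1)) := by
      field_simp
      ring
    linarith
  -- power lower bound
  have hC : (1 / (((d : ℝ) + 1) * ((sylvester (ℓ + 1) : ℝ) - 1))) ^ (d - ℓ) ≤ α ^ (d - ℓ) :=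
    pow_le_pow_left₀ (le_of_lt hq) hα1 (d - ℓ)
  have key : 1 / (((sylvester ℓ : ℝ) - 1) ^ 2 * ((d : ℝ) + 1) ^ (d - ℓ + 1) *
      ((sylvester (ℓ + 1) : ℝ) - 1) ^ (d - ℓ)) =
      1 / ((sylvester ℓ : ℝ) - 1) * (1 / (((d : ℝ) + 1) * ((sylvester ℓ : ℝ) - 1))) *
      (1 / (((d : ℝ) + 1) * ((sylvester (ℓ + 1) : ℝ) - 1))) ^ (d - ℓ) := by
    rw [div_pow, one_pow, mul_pow]
    field_simp
    ring
  rw [ge_iff_le, key]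
  have hApos : (0 : ℝ) < 1 / ((sylvester ℓ : ℝ) - 1) := by positivity
  have hBpos : (0 : ℝ) < 1 / (((d : ℝ) + 1) * ((sylvester ℓ : ℝ) - 1)) := by positivity
  have hAB : 1 / ((sylvester ℓ : ℝ) - 1) * (1 / (((d : ℝ) + 1) * ((sylvester ℓ : ℝ) - 1))) ≤
      (∏ i ∈ Finset.Icc 1 (ℓ - 1), (1 / (sylvester i : ℝ) + α)) *
        (1 / ((sylvester ℓ : ℝ) - 1) - (d : ℝ) * α) :=
    mul_le_mul hA hB (le_of_lt hBpos) (le_trans (le_of_lt hApos) hA)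
  exact mul_le_mul hAB hC (le_of_lt (by positivity))
    (le_trans (le_of_lt (by positivity)) hAB)
end
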